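/- For all cache algorithms P and Q and all lengths l: r_{P,Q}(l) ≤ 2·r_{Q,P}(l) − 1. Consequently r_{P,Q} and r_{Q,P} have the same asymptotic order: O(r_{P,Q}(l)) = O(r_{Q,P}(l)). -/

import Mathlib

structure CacheAlg (B : Type) where
  S : Type
  init : S
  n : ℕ
  tr : S → Fin n → S
  evict : S → B → S × Fin n

variable {B : Type} [DecidableEq B]

abbrev CacheAlg.Config (P : CacheAlg B) := P.S × (Fin P.n → Option B)

noncomputable def CacheAlg.upd (P : CacheAlg B) (g : P.Config) (b : B) : P.Config :=
  if h : ∃ j, g.2 j = some b then (P.tr g.1 h.choose, g.2)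
  else ((P.evict g.1 b).1, Function.update g.2 (P.evict g.1 b).2 (some b))

noncomputable def CacheAlg.updTrace (P : CacheAlg B) (g : P.Config) : List B → P.Config
  | [] => g
  | b :: t => P.updTrace (P.upd g b) t

noncomputable def CacheAlg.missesFrom (P : CacheAlg B) (g : P.Config) : List B → ℕ
  | [] => 0
  | b :: t => (if ∃ j, g.2 j = some b then 0 else 1) + P.missesFrom (P.upd g b) t

def CacheAlg.initConfig (P : CacheAlg B) : P.Config := (P.init, fun _ => none)

/-- Number of misses of `P` on trace `t` from the empty initial configuration. -/
noncomputable def CacheAlg.misses (P : CacheAlg B) (t : List B) : ℕ := P.missesFrom P.initConfig t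

/-- The leak ratio `r_{P,Q}(l)`: supremum over sets `T` of traces of length `l`
of `|P(T)| / |Q(T)|`. -/
noncomputable def leakRatio (P Q : CacheAlg B) (l : ℕ) : ℝ :=
  sSup {r : ℝ | ∃ T : Finset (List B), T.Nonempty ∧ (∀ t ∈ T, t.length = l) ∧
    r = ((T.image P.misses).card : ℝ) / ((T.image Q.misses).card : ℝ)}

/-- Lifting of a bijection on blocks to cache contents, mapping `⊥` to `⊥`. -/
def renameContent (π : B ≃ B) {n : ℕ} (c : Fin n → Option B) : Fin n → Option B :=
  fun j => (c j).map π

/-- Lifting of a bijection on blocks to cache configurations. -/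
def CacheAlg.renameConfig (P : CacheAlg B) (π : B ≃ B) (g : P.Config) : P.Config :=
  (g.1, renameContent π g.2)

/-- The eviction function is independent of the accessed block. -/
def CacheAlg.EvictBlockIndep (P : CacheAlg B) : Prop :=
  ∀ (s : P.S) (b b' : B), P.evict s b = P.evict s b'

/-- Congruence of pairs of cache configurations via a simultaneous renaming. -/
def CacheCongruent (P Q : CacheAlg B) (x y : P.Config × Q.Config) : Prop :=
  ∃ π : B ≃ B, P.renameConfig π x.1 = y.1 ∧ Q.renameConfig π x.2 = y.2

section Aux
variable {B : Type} [DecidableEq B]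

lemma missesFrom_le_length (P : CacheAlg B) (g : P.Config) (t : List B) :
    P.missesFrom g t ≤ t.length := by
  induction t generalizing g with
  | nil => simp [CacheAlg.missesFrom]
  | cons b t ih =>
    rw [CacheAlg.missesFrom]
    have := ih (P.upd g b)
    split <;> simp <;> omega

lemma missesFrom_append (P : CacheAlg B) (g : P.Config) (s u : List B) :
    P.missesFrom g (s ++ u) = P.missesFrom g s + P.missesFrom (P.updTrace g s) u := by
  induction s generalizing g with
  | nil => simp [CacheAlg.missesFrom, CacheAlg.updTrace]
  | cons b s ih =>
    rw [List.cons_append, CacheAlg.missesFrom, CacheAlg.missesFrom, CacheAlg.updTrace, ih]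
    omega

lemma mem_upd_self (P : CacheAlg B) (g : P.Config) (b : B) :
    ∃ j, (P.upd g b).2 j = some b := by
  rw [CacheAlg.upd]
  split
  · next h => exact ⟨h.choose, h.choose_spec⟩
  · exact ⟨(P.evict g.1 b).2, by simp⟩

lemma upd_hit (P : CacheAlg B) (g : P.Config) (b : B) (h : ∃ j, g.2 j = some b) :
    (P.upd g b).2 = g.2 := by
  rw [CacheAlg.upd, dif_pos h]

lemma missesFrom_replicate (P : CacheAlg B) (g : P.Config) (b : B)
    (h : ∃ j, g.2 j = some b) (k : ℕ) :
    P.missesFrom g (List.replicate k b) = 0 := by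
  induction k generalizing g with
  | zero => simp [CacheAlg.missesFrom]
  | succ k ih =>
    rw [List.replicate_succ, CacheAlg.missesFrom, if_pos h, ih]
    · rw [upd_hit P g b h]; exact h

lemma updTrace_concat_last (P : CacheAlg B) (s : List B) (b : B) (g : P.Config) :
    ∃ j, (P.updTrace g (s ++ [b])).2 j = some b := by
  induction s generalizing g with
  | nil => exact mem_upd_self P g b
  | cons a s ih => rw [List.cons_append, CacheAlg.updTrace]; exact ih _

lemma misses_pos (P : CacheAlg B) (t : List B) (ht : t ≠ []) : 1 ≤ P.misses t := by
  obtain ⟨b, t, rfl⟩ := List.exists_cons_of_ne_nil ht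
  rw [CacheAlg.misses, CacheAlg.missesFrom, if_neg]
  · omega
  · rintro ⟨j, hj⟩; simp [CacheAlg.initConfig] at hj

lemma exists_fresh (P Q : CacheAlg B) (hB : (P.n + Q.n : Cardinal) < Cardinal.mk B)
    (gP : P.Config) (gQ : Q.Config) :
    ∃ b : B, (∀ j, gP.2 j ≠ some b) ∧ (∀ j, gQ.2 j ≠ some b) := by
  by_contra hcon
  push_neg at hcon
  have hf : ∀ b : B, (∃ j, gP.2 j = some b) ∨ (∃ j, gQ.2 j = some b) := by
    intro b
    by_cases h : ∃ j, gP.2 j = some b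
    · exact .inl h
    · push_neg at h
      exact .inr (hcon b h)
  classical
  have hinj : ∃ F : B → Fin P.n ⊕ Fin Q.n, Function.Injective F := by
    refine ⟨fun b => if h : ∃ j, gP.2 j = some b then Sum.inl h.choose else
      Sum.inr ((hf b).resolve_left h).choose, ?_⟩
    intro b b' hbb'
    by_cases h : ∃ j, gP.2 j = some b <;> by_cases h' : ∃ j, gP.2 j = some b' <;>
      simp [h, h'] at hbb'
    · have h1 := h.choose_spec
      have h2 := h'.choose_spec
      rw [← hbb'] at h2
      rw [h1] at h2
      exact Option.some_injective _ h2
    · have h1 := ((hf b).resolve_left h).choose_spec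
      have h2 := ((hf b').resolve_left h').choose_spec
      rw [← hbb'] at h2
      rw [h1] at h2
      exact Option.some_injective _ h2
  obtain ⟨F, hF⟩ := hinj
  have := Cardinal.mk_le_of_injective hF
  simp at this
  exact absurd this (not_le.mpr hB)

end Aux
section Aux2
variable {B : Type} [DecidableEq B]

lemma freshpad (P Q : CacheAlg B) (hB : (P.n + Q.n : Cardinal) < Cardinal.mk B) :
    ∀ (k m : ℕ), m ≤ k → ∀ (gP : P.Config) (gQ : Q.Config),
      (0 < k → 0 < m ∨ ∃ b, (∃ j, gP.2 j = some b) ∧ (∃ j, gQ.2 j = some b)) →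
      ∃ s : List B, s.length = k ∧ P.missesFrom gP s = m ∧ Q.missesFrom gQ s = m := by
  intro k
  induction k with
  | zero =>
    intro m hm gP gQ _
    exact ⟨[], rfl, by simp [CacheAlg.missesFrom]; omega, by simp [CacheAlg.missesFrom]; omega⟩
  | succ k ih =>
    intro m hm gP gQ hcond
    rcases hcond (Nat.succ_pos k) with hm0 | ⟨b, hbP, hbQ⟩
    · -- m ≥ 1 : access a fresh block
      obtain ⟨c, hcP, hcQ⟩ := exists_fresh P Q hB gP gQ
      obtain ⟨s, hs, hsp, hsq⟩ := ih (m - 1) (by omega) (P.upd gP c) (Q.upd gQ c)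
        (fun _ => .inr ⟨c, mem_upd_self P gP c, mem_upd_self Q gQ c⟩)
      refine ⟨c :: s, by simp [hs], ?_, ?_⟩
      · rw [CacheAlg.missesFrom, if_neg (by push_neg; exact hcP), hsp]; omega
      · rw [CacheAlg.missesFrom, if_neg (by push_neg; exact hcQ), hsq]; omega
    · -- pad with the co-resident block
      by_cases hm0 : 0 < m
      · obtain ⟨c, hcP, hcQ⟩ := exists_fresh P Q hB gP gQ
        obtain ⟨s, hs, hsp, hsq⟩ := ih (m - 1) (by omega) (P.upd gP c) (Q.upd gQ c)
          (fun _ => .inr ⟨c, mem_upd_self P gP c, mem_upd_self Q gQ c⟩)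
        refine ⟨c :: s, by simp [hs], ?_, ?_⟩
        · rw [CacheAlg.missesFrom, if_neg (by push_neg; exact hcP), hsp]; omega
        · rw [CacheAlg.missesFrom, if_neg (by push_neg; exact hcQ), hsq]; omega
      · have hm' : m = 0 := by omega
        subst hm'
        exact ⟨List.replicate (k + 1) b, by simp,
          missesFrom_replicate P gP b hbP _, missesFrom_replicate Q gQ b hbQ _⟩

lemma discrete_ivt (v : ℕ → ℕ) :
    ∀ (n : ℕ), (∀ i < n, v (i + 1) ≤ v i + 1 ∧ v i ≤ v (i + 1) + 1) →
      ∀ c, (v 0 ≤ c ∧ c ≤ v n) ∨ (v n ≤ c ∧ c ≤ v 0) → ∃ i ≤ n, v i = c := by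
  intro n
  induction n with
  | zero => intro _ c hc; exact ⟨0, le_refl 0, by omega⟩
  | succ n ih =>
    intro hstep c hc
    by_cases h : (v 0 ≤ c ∧ c ≤ v n) ∨ (v n ≤ c ∧ c ≤ v 0)
    · obtain ⟨i, hi, hv⟩ := ih (fun i hi => hstep i (by omega)) c h
      exact ⟨i, by omega, hv⟩
    · have := hstep n (by omega)
      push_neg at h
      exact ⟨n + 1, le_refl _, by omega⟩
end Aux2
section Aux3
variable {B : Type} [DecidableEq B]

lemma lrSet_bddAbove (P Q : CacheAlg B) (l : ℕ) :
    BddAbove {r : ℝ | ∃ T : Finset (List B), T.Nonempty ∧ (∀ t ∈ T, t.length = l) ∧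
      r = ((T.image P.misses).card : ℝ) / ((T.image Q.misses).card : ℝ)} := by
  refine ⟨(l + 1 : ℝ), ?_⟩
  rintro r ⟨T, hT, hlen, rfl⟩
  have h1 : (T.image P.misses).card ≤ l + 1 := by
    have hsub : T.image P.misses ⊆ Finset.range (l + 1) := by
      intro x hx
      simp only [Finset.mem_image] at hx
      obtain ⟨a, ha, rfl⟩ := hx
      have := missesFrom_le_length P P.initConfig a
      rw [hlen a ha] at this
      simp only [Finset.mem_range]
      rw [CacheAlg.misses]
      omega
    calc (T.image P.misses).card ≤ (Finset.range (l + 1)).card := Finset.card_le_card hsub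
      _ = l + 1 := Finset.card_range _
  have h2 : 1 ≤ (T.image Q.misses).card := Finset.card_pos.mpr (hT.image _)
  have hnum : ((T.image P.misses).card : ℝ) ≤ (l + 1 : ℝ) := by exact_mod_cast h1
  have hden : (1 : ℝ) ≤ ((T.image Q.misses).card : ℝ) := by exact_mod_cast h2
  calc ((T.image P.misses).card : ℝ) / ((T.image Q.misses).card : ℝ)
      ≤ ((T.image P.misses).card : ℝ) := div_le_self (by positivity) hden
    _ ≤ (l + 1 : ℝ) := hnum

lemma one_le_leakRatio (P Q : CacheAlg B) (hBne : Nonempty B) (l : ℕ) :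
    1 ≤ leakRatio P Q l := by
  obtain ⟨b⟩ := hBne
  rw [leakRatio]
  apply le_csSup (lrSet_bddAbove P Q l)
  refine ⟨{List.replicate l b}, Finset.singleton_nonempty _, by simp, by simp⟩

lemma misses_take_split (P : CacheAlg B) (t : List B) (i : ℕ) :
    P.misses t = P.misses (t.take i) +
      P.missesFrom (P.updTrace P.initConfig (t.take i)) (t.drop i) := by
  conv_lhs => rw [CacheAlg.misses, ← List.take_append_drop i t]
  rw [missesFrom_append]
  rfl

lemma misses_take_le (P : CacheAlg B) (t : List B) (i : ℕ) :
    P.misses (t.take i) ≤ P.misses t ∧ P.misses t ≤ P.misses (t.take i) + (t.length - i) := by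
  have h := misses_take_split P t i
  have h2 := missesFrom_le_length P (P.updTrace P.initConfig (t.take i)) (t.drop i)
  rw [List.length_drop] at h2
  omega

lemma misses_take_step (P : CacheAlg B) (t : List B) (i : ℕ) (hi : i < t.length) :
    P.misses (t.take i) ≤ P.misses (t.take (i + 1)) ∧
      P.misses (t.take (i + 1)) ≤ P.misses (t.take i) + 1 := by
  have hgs : t[i]?.toList = [t[i]] := by
    rw [List.getElem?_eq_getElem hi]
    rfl
  rw [List.take_succ, hgs]
  simp only [CacheAlg.misses]
  rw [missesFrom_append]
  have := missesFrom_le_length P (P.updTrace P.initConfig (t.take i)) [t[i]]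
  simp only [List.length_singleton] at this
  omega
end Aux3
section Aux4
variable {B : Type} [DecidableEq B]

lemma misses_nil (P : CacheAlg B) : P.misses ([] : List B) = 0 := rfl

lemma single_trace (P Q : CacheAlg B) (hB : (P.n + Q.n : Cardinal) < Cardinal.mk B)
    (t : List B) :
    ((max (P.misses t) (Q.misses t) - min (P.misses t) (Q.misses t) : ℕ) + 1 : ℝ) ≤
      leakRatio Q P t.length := by
  classical
  set l := t.length with hl
  set C := P.misses t with hC
  set D := Q.misses t with hD
  -- construct for each i ≤ l a suffix s i equalizing the P-miss count to C
  have hcons : ∀ i : ℕ, ∃ s : List B, i ≤ l →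
      (t.take i ++ s).length = l ∧ P.misses (t.take i ++ s) = C ∧
      Q.misses (t.take i ++ s) = Q.misses (t.take i) + (C - P.misses (t.take i)) := by
    intro i
    by_cases hi : i ≤ l
    · have hPle := misses_take_le P t i
      have hQle := misses_take_le Q t i
      have hbcond : 0 < l - i → 0 < C - P.misses (t.take i) ∨
          ∃ b, (∃ j, (P.updTrace P.initConfig (t.take i)).2 j = some b) ∧
            (∃ j, (Q.updTrace Q.initConfig (t.take i)).2 j = some b) := by
        intro hk
        by_cases hm : 0 < C - P.misses (t.take i)
        · exact .inl hm
        · right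
          -- P.misses (t.take i) = C; must have i ≥ 1
          rcases Nat.eq_zero_or_pos i with rfl | hipos
          · exfalso
            have ht0 : P.misses (t.take 0) = 0 := by simp [misses_nil]
            have htne : t ≠ [] := by
              intro h
              rw [h] at hl
              simp [hl] at hk
            have := misses_pos P t htne
            omega
          · obtain ⟨j, rfl⟩ := Nat.exists_eq_add_of_lt hipos
            have hjl : j < l := by omega
            have hgs : t[j]?.toList = [t[j]] := by
              rw [List.getElem?_eq_getElem (by omega : j < t.length)]
              rfl
            have htake : t.take (j + 1) = t.take j ++ [t[j]] := by
              rw [List.take_succ, hgs]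
            rw [Nat.zero_add] at *
            refine ⟨t[j], ?_, ?_⟩
            · rw [htake]
              exact updTrace_concat_last P _ _ _
            · rw [htake]
              exact updTrace_concat_last Q _ _ _
      obtain ⟨s, hslen, hsP, hsQ⟩ := freshpad P Q hB (l - i) (C - P.misses (t.take i))
        (by omega)
        (P.updTrace P.initConfig (t.take i)) (Q.updTrace Q.initConfig (t.take i)) hbcond
      refine ⟨s, fun _ => ⟨?_, ?_, ?_⟩⟩
      · rw [List.length_append, List.length_take]
        omega
      · rw [CacheAlg.misses, missesFrom_append, hsP, ← CacheAlg.misses]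
        omega
      · rw [CacheAlg.misses, missesFrom_append, hsQ, ← CacheAlg.misses]
    · exact ⟨[], fun h => absurd h hi⟩
  choose s hs using hcons
  set u : ℕ → List B := fun i => t.take i ++ s i with hu
  set T : Finset (List B) := (Finset.range (l + 1)).image u with hT
  have hmemT : ∀ i ≤ l, u i ∈ T := by
    intro i hi
    exact Finset.mem_image_of_mem u (Finset.mem_range.mpr (by omega))
  have hTne : T.Nonempty := ⟨u 0, hmemT 0 (by omega)⟩
  have hTlen : ∀ w ∈ T, w.length = l := by
    intro w hw
    rw [hT] at hw
    simp only [Finset.mem_image, Finset.mem_range] at hw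
    obtain ⟨i, hi, rfl⟩ := hw
    exact (hs i (by omega)).1
  -- P-image is a singleton {C}
  have himP : T.image P.misses = {C} := by
    apply Finset.eq_singleton_iff_unique_mem.mpr
    constructor
    · have hmC : P.misses (u l) = C := (hs l (le_refl l)).2.1
      rw [← hmC]
      exact Finset.mem_image_of_mem _ (hmemT l (le_refl l))
    · intro x hx
      simp only [Finset.mem_image] at hx
      obtain ⟨w, hw, rfl⟩ := hx
      rw [hT] at hw
      simp only [Finset.mem_image, Finset.mem_range] at hw
      obtain ⟨i, hi, rfl⟩ := hw
      exact (hs i (by omega)).2.1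
  -- Q-image covers the interval between C and D
  set v : ℕ → ℕ := fun i => Q.misses (t.take i) + (C - P.misses (t.take i)) with hv
  have hv0 : v 0 = C := by
    simp [hv, misses_nil]
  have hvl : v l = D := by
    have h1 : t.take l = t := by rw [hl]; exact List.take_length
    simp [hv, h1, hC, hD]
  have hstepv : ∀ i < l, v (i + 1) ≤ v i + 1 ∧ v i ≤ v (i + 1) + 1 := by
    intro i hi
    have hp := misses_take_step P t i (by omega)
    have hq := misses_take_step Q t i (by omega)
    have hp1 := misses_take_le P t i
    have hp2 := misses_take_le P t (i + 1)
    simp only [hv]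
    omega
  have hivt := discrete_ivt v l hstepv
  have hsub : Finset.Icc (min C D) (max C D) ⊆ T.image Q.misses := by
    intro c hc
    rw [Finset.mem_Icc] at hc
    obtain ⟨i, hi, hvi⟩ := hivt c (by rw [hv0, hvl]; omega)
    have hQc : Q.misses (u i) = c := by
      rw [(hs i hi).2.2]
      exact hvi
    rw [← hQc]
    exact Finset.mem_image_of_mem _ (hmemT i hi)
  have hcard : max C D - min C D + 1 ≤ (T.image Q.misses).card := by
    calc max C D - min C D + 1 = (Finset.Icc (min C D) (max C D)).card := by
          rw [Nat.card_Icc]; omega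
      _ ≤ _ := Finset.card_le_card hsub
  rw [leakRatio]
  have hmem : ((T.image Q.misses).card : ℝ) / ((T.image P.misses).card : ℝ) ∈
      {r : ℝ | ∃ T' : Finset (List B), T'.Nonempty ∧ (∀ w ∈ T', w.length = l) ∧
        r = ((T'.image Q.misses).card : ℝ) / ((T'.image P.misses).card : ℝ)} :=
    ⟨T, hTne, hTlen, rfl⟩
  refine le_trans ?_ (le_csSup (lrSet_bddAbove Q P l) hmem)
  rw [himP]
  simp only [Finset.card_singleton, Nat.cast_one, div_one]
  exact_mod_cast hcard
end Aux4
section Aux5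
variable {B : Type} [DecidableEq B]

lemma nonempty_of_card (P Q : CacheAlg B) (hB : (P.n + Q.n : Cardinal) < Cardinal.mk B) :
    Nonempty B := by
  rw [← Cardinal.mk_ne_zero_iff]
  intro h
  rw [h] at hB
  exact absurd zero_le (not_le.mpr hB)

lemma key_ineq (P Q : CacheAlg B) (hB : (P.n + Q.n : Cardinal) < Cardinal.mk B) (l : ℕ) :
    leakRatio P Q l ≤ 2 * leakRatio Q P l - 1 := by
  have hBne : Nonempty B := nonempty_of_card P Q hB
  set R := leakRatio Q P l with hR
  have hR1 : 1 ≤ R := one_le_leakRatio Q P hBne l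
  rw [leakRatio]
  apply Real.sSup_le
  · rintro r ⟨T, hT, hlen, rfl⟩
    set K : ℕ := ⌊R⌋₊ - 1 with hK
    have hKfloor : 1 ≤ ⌊R⌋₊ := Nat.le_floor (by exact_mod_cast hR1)
    have hKle : (K : ℝ) ≤ R - 1 := by
      have heq : (K : ℕ) + 1 = ⌊R⌋₊ := by omega
      have h1 : ((K + 1 : ℕ) : ℝ) ≤ R := by
        rw [heq]
        exact Nat.floor_le (by linarith)
      push_cast at h1
      linarith
    have hd : ∀ w ∈ T,
        max (P.misses w) (Q.misses w) - min (P.misses w) (Q.misses w) ≤ K := by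
      intro w hw
      have hst := single_trace P Q hB w
      rw [hlen w hw] at hst
      have hdle : (max (P.misses w) (Q.misses w) - min (P.misses w) (Q.misses w)) + 1
          ≤ ⌊R⌋₊ := by
        apply Nat.le_floor
        push_cast
        push_cast at hst
        linarith
      omega
    have hcover : T.image P.misses ⊆
        (T.image Q.misses).biUnion (fun q => Finset.Icc (q - K) (q + K)) := by
      intro x hx
      simp only [Finset.mem_image] at hx
      obtain ⟨w, hw, rfl⟩ := hx
      rw [Finset.mem_biUnion]
      refine ⟨Q.misses w, Finset.mem_image_of_mem _ hw, ?_⟩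
      have := hd w hw
      rw [Finset.mem_Icc]
      omega
    have hcards : (T.image P.misses).card ≤ (T.image Q.misses).card * (2 * K + 1) := by
      calc (T.image P.misses).card
          ≤ ((T.image Q.misses).biUnion (fun q => Finset.Icc (q - K) (q + K))).card :=
            Finset.card_le_card hcover
        _ ≤ ∑ q ∈ T.image Q.misses, (Finset.Icc (q - K) (q + K)).card :=
            Finset.card_biUnion_le
        _ ≤ ∑ _q ∈ T.image Q.misses, (2 * K + 1) :=
            Finset.sum_le_sum (fun q _ => by rw [Nat.card_Icc]; omega)
        _ = (T.image Q.misses).card * (2 * K + 1) := by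
            rw [Finset.sum_const, smul_eq_mul]
    have hQpos : (0:ℝ) < ((T.image Q.misses).card : ℝ) := by
      exact_mod_cast Finset.card_pos.mpr (hT.image _)
    rw [div_le_iff₀ hQpos]
    have h2 : ((T.image P.misses).card : ℝ) ≤
        ((T.image Q.misses).card : ℝ) * (2 * (K:ℝ) + 1) := by
      exact_mod_cast hcards
    nlinarith
  · linarith

end Aux5

theorem leakRatio_symmetric_aux (P Q : CacheAlg B)
    (hB : (P.n + Q.n : Cardinal) < Cardinal.mk B) :
    (∀ l : ℕ, leakRatio P Q l ≤ 2 * leakRatio Q P l - 1) ∧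
    (leakRatio P Q =O[Filter.atTop] leakRatio Q P ∧
     leakRatio Q P =O[Filter.atTop] leakRatio P Q) := by
  have hB' : ((Q.n : Cardinal) + (P.n : Cardinal)) < Cardinal.mk B := by
    rwa [add_comm]
  have hBne : Nonempty B := nonempty_of_card P Q hB
  refine ⟨fun l => key_ineq P Q hB l, ?_, ?_⟩
  · apply Asymptotics.IsBigO.of_bound 2
    filter_upwards with l
    have h1 := key_ineq P Q hB l
    have h2 := one_le_leakRatio Q P hBne l
    have h3 := one_le_leakRatio P Q hBne l
    rw [Real.norm_eq_abs, Real.norm_eq_abs, abs_of_nonneg (by linarith),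
      abs_of_nonneg (by linarith)]
    linarith
  · apply Asymptotics.IsBigO.of_bound 2
    filter_upwards with l
    have h1 := key_ineq Q P hB' l
    have h2 := one_le_leakRatio Q P hBne l
    have h3 := one_le_leakRatio P Q hBne l
    rw [Real.norm_eq_abs, Real.norm_eq_abs, abs_of_nonneg (by linarith),
      abs_of_nonneg (by linarith)]
    linarith

theorem leakRatio_symmetric (P Q : CacheAlg B)
    (hB : (P.n + Q.n : Cardinal) < Cardinal.mk B) :
    (∀ l : ℕ, leakRatio P Q l ≤ 2 * leakRatio Q P l - 1) ∧
    (leakRatio P Q =O[Filter.atTop] leakRatio Q P ∧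
     leakRatio Q P =O[Filter.atTop] leakRatio P Q) := by
  exact leakRatio_symmetric_aux P Q hB
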